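/- Let Γ and L be groups with finite generating sets S_Γ and S_L respectively, and endow Γ ≀ L with the 'switch or walk' generating set S_Γ ∪ S_L. For every g = (γ,f) ∈ Γ ≀ L, the word norm is |g| = Σ_{x∈Γ} |f(x)|_{S_L} + d_TS(e_Γ, supp(f), γ), where d_TS is taken in Cay(Γ,S_Γ). -/

import Mathlib

/-! ### Cayley graphs, word metric, spheres, annuli -/

/-- The Cayley graph of a group with respect to a set `S` of generators
(symmetrized, without loops). -/
def cayley (G : Type*) [Group G] (S : Set G) : SimpleGraph G where
  Adj g h := g ≠ h ∧ (g⁻¹ * h ∈ S ∨ h⁻¹ * g ∈ S)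
  symm := by
    constructor
    rintro g h ⟨hne, hs⟩
    exact ⟨hne.symm, hs.symm⟩
  loopless := by
    constructor
    rintro g ⟨hne, -⟩
    exact hne rfl

variable {G : Type*} [Group G]

/-- The word length of `g`, i.e. the distance from the identity to `g` in the Cayley graph. -/
noncomputable def wlen (S : Set G) (g : G) : ℕ :=
  (cayley G S).dist 1 g

/-- The ball of radius `n`. -/
def wBall (S : Set G) (n : ℕ) : Set G := {g | wlen S g ≤ n}

/-- The sphere of radius `n`. -/
def wSphere (S : Set G) (n : ℕ) : Set G := {g | wlen S g = n}

/-- The annulus of radius `n` and thickness `r`, i.e. `B(n+r) \ B(n-1)`. -/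
def wAnnulus (S : Set G) (n r : ℕ) : Set G := {g | n ≤ wlen S g ∧ wlen S g ≤ n + r}

/-- The part of `A` lying in infinite connected components of the subgraph of the
Cayley graph induced on `A`.  When the infinite component is unique (one-ended case)
this is exactly the infinite component of `A`. -/
def infPart (S : Set G) (A : Set G) : Set G :=
  {g | ∃ hg : g ∈ A, {w : ↥A | ((cayley G S).induce A).Reachable ⟨g, hg⟩ w}.Infinite}

/-- `S(n,r)^∞ = B(n+r) ∩ B(n-1)^{c,∞}`: the elements of the annulus connected to infinity. -/
def sphereInf (S : Set G) (n r : ℕ) : Set G :=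
  wAnnulus S n r ∩ infPart S {g | n ≤ wlen S g}

/-- The graph `S(n,r)^∞` is connected. -/
def SpheresConn (S : Set G) (n r : ℕ) : Prop :=
  ((cayley G S).induce (sphereInf S n r)).Connected

/-- The connection thickness `th_{G,S}(n)`: the least `r` such that `S(n,r)^∞` is connected. -/
noncomputable def connThickness (S : Set G) (n : ℕ) : ℕ :=
  sInf {r | SpheresConn S n r}

/-- The retreat depth of `g`: the least `d ≥ 0` such that `g` belongs to an infinite
component of the complement of `B(|g|-d-1)`. -/
noncomputable def retreatDepth (S : Set G) (g : G) : ℕ :=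
  sInf {d | g ∈ infPart S {x | wlen S g ≤ wlen S x + d}}

/-- `rd(G,S) = sup_g rd(g)`, as an extended natural number. -/
noncomputable def rdSup (S : Set G) : ℕ∞ :=
  ⨆ g : G, (retreatDepth S g : ℕ∞)

/-- `g` is a dead-end: no neighbour of `g` is further away from the identity. -/
def IsDeadEnd (S : Set G) (g : G) : Prop :=
  ∀ h : G, (cayley G S).Adj g h → wlen S h ≤ wlen S g

/-- `x` and `y` are connected by a path staying inside `A`. -/
def connectedIn (S : Set G) (A : Set G) (x y : G) : Prop :=
  ∃ w : (cayley G S).Walk x y, ∀ v ∈ w.support, v ∈ A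

/-- The travelling salesman distance from `x` to `y` through `A`: the length of the
shortest walk from `x` to `y` visiting every vertex of `A`. -/
noncomputable def tsDist {V : Type*} (H : SimpleGraph V) (x : V) (A : Set V) (y : V) : ℕ :=
  sInf {n | ∃ w : H.Walk x y, w.length = n ∧ ∀ a ∈ A, a ∈ w.support}

/-! ### Entropy of partitions -/

/-- Shannon entropy of the partition of the finite set `A` into blocks `P x` (the block
of `x ∈ A`), with respect to the uniform measure:
`H(Π) = -∑_{π ∈ Π} μ(π) log μ(π) = -(1/|A|) ∑_{x ∈ A} log (|P x|/|A|)`. -/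
noncomputable def partitionEntropy (A : Set G) (P : G → Set G) : ℝ :=
  -(1 / (Nat.card ↥A : ℝ)) * ∑ᶠ x ∈ A, Real.log ((Nat.card ↥(P x) : ℝ) / (Nat.card ↥A : ℝ))

/-- Normalised entropy `h(Π) = H(Π)/log |Π|`, where `|Π|` is the number of blocks. -/
noncomputable def normalizedEntropy (A : Set G) (P : G → Set G) : ℝ :=
  partitionEntropy A P / Real.log (Nat.card ↥(P '' A))

/-- The block of `x` in the partition `Π(n,r)` of `S(n)`: elements of `S(n)` joined
to `x` by a path inside the annulus `S(n,r)`. -/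
def piBlock (S : Set G) (n r : ℕ) (x : G) : Set G :=
  {y | y ∈ wSphere S n ∧ connectedIn S (wAnnulus S n r) x y}

/-- The block of `x` in the partition `Π(n,r)^∞` of `S(n)^∞`: elements of `S(n)^∞`
joined to `x` by a path inside `S(n,r)^∞`. -/
def piBlockInf (S : Set G) (n r : ℕ) (x : G) : Set G :=
  {y | y ∈ sphereInf S n 0 ∧ connectedIn S (sphereInf S n r) x y}

/-! ### Wreath products -/

/-- Finitely supported functions `Γ → L`, as a subgroup of the product group. -/
def LampGroup (Γ L : Type*) [Group Γ] [Group L] : Subgroup (Γ → L) where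
  carrier := {f | (Function.mulSupport f).Finite}
  one_mem' := by
    refine Set.Finite.subset Set.finite_empty fun x hx => ?_
    exact hx rfl
  mul_mem' := by
    intro a b ha hb
    exact (Set.Finite.union ha hb).subset (Function.mulSupport_mul a b)
  inv_mem' := by
    intro a ha
    refine ha.subset fun x hx => ?_
    simp only [Function.mem_mulSupport, Pi.inv_apply, ne_eq, inv_eq_one] at hx
    exact hx

variable (Γ L : Type*) [Group Γ] [Group L]

/-- Translation action of `Γ` on finitely supported lamp configurations. -/
noncomputable def shiftAut (γ : Γ) : ↥(LampGroup Γ L) ≃* ↥(LampGroup Γ L) where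
  toFun f := ⟨fun x => (f : Γ → L) (γ⁻¹ * x), by
    show (Function.mulSupport fun x => (f : Γ → L) (γ⁻¹ * x)).Finite
    exact Set.Finite.preimage ((mul_right_injective γ⁻¹).injOn) f.2⟩
  invFun f := ⟨fun x => (f : Γ → L) (γ * x), by
    show (Function.mulSupport fun x => (f : Γ → L) (γ * x)).Finite
    exact Set.Finite.preimage ((mul_right_injective γ).injOn) f.2⟩
  left_inv := by
    intro f
    apply Subtype.ext
    funext x
    simp
  right_inv := by
    intro f
    apply Subtype.ext
    funext x
    simp
  map_mul' := by
    intro f g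
    apply Subtype.ext
    rfl

/-- The action homomorphism `Γ →* Aut(⊕_Γ L)`. -/
noncomputable def shiftHom : Γ →* MulAut ↥(LampGroup Γ L) where
  toFun := shiftAut Γ L
  map_one' := by
    apply MulEquiv.ext
    intro f
    apply Subtype.ext
    funext x
    simp [shiftAut]
  map_mul' := by
    intro a b
    apply MulEquiv.ext
    intro f
    apply Subtype.ext
    funext x
    simp [shiftAut, mul_assoc]

/-- The (restricted) wreath product `Γ ≀ L = Γ ⋉ (⊕_Γ L)`. -/
abbrev Wreath := ↥(LampGroup Γ L) ⋊[shiftHom Γ L] Γ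

open Classical in
/-- The element `(e_Γ, δ_l)` of the wreath product: lamp `l` at the identity. -/
noncomputable def lampElt (l : L) : Wreath Γ L :=
  ⟨⟨fun x => if x = (1 : Γ) then l else 1, by
    refine Set.Finite.subset (Set.finite_singleton (1 : Γ)) fun x hx => ?_
    rcases eq_or_ne x 1 with h | h
    · simp [h]
    · exact absurd (if_neg h) hx⟩, 1⟩

/-- The element `(γ, Id)` of the wreath product. -/
def baseElt (γ : Γ) : Wreath Γ L := ⟨1, γ⟩

/-- The "switch-walk-switch" generating set `L S_Γ L`. -/
noncomputable def swsw (SΓ : Set Γ) : Set (Wreath Γ L) :=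
  {g | ∃ l l' : L, ∃ s ∈ SΓ, g = lampElt Γ L l * baseElt Γ L s * lampElt Γ L l'}

/-- The "switch or walk" generating set `S_Γ ∪ S_L`. -/
noncomputable def walkOrSwitch (SΓ : Set Γ) (SL : Set L) : Set (Wreath Γ L) :=
  (baseElt Γ L '' SΓ) ∪ (lampElt Γ L '' SL)

/-- `ℤ` written multiplicatively. -/
abbrev MZ := Multiplicative ℤ

/-- The generating set `{±1}` of `ℤ`. -/
def genZ : Set MZ := {Multiplicative.ofAdd 1, Multiplicative.ofAdd (-1)}

/-- The ladder `ℤ × ℤ/2ℤ` written multiplicatively. -/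
abbrev Ladder := Multiplicative (ℤ × ZMod 2)

/-- The generating set `{(±1,0), (0,1)}` of the ladder. -/
def genLadder : Set Ladder :=
  {Multiplicative.ofAdd (1, 0), Multiplicative.ofAdd (-1, 0), Multiplicative.ofAdd (0, 1)}

/-- The set of vertices of the minimal subtree of a tree containing a set `X`:
all vertices lying on a geodesic between two points of `X`. -/
def treeHull {V : Type*} (H : SimpleGraph V) (X : Set V) : Set V :=
  {v | ∃ x ∈ X, ∃ y ∈ X, H.dist x v + H.dist v y = H.dist x y}


namespace Stmt14Aux
open SimpleGraph

variable {G : Type*} [Group G] {S : Set G}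

/-- Left multiplication as a graph homomorphism of the Cayley graph. -/
def mulLeftHom (S : Set G) (g : G) : cayley G S →g cayley G S where
  toFun x := g * x
  map_rel' := by
    rintro a b ⟨hne, hs⟩
    refine ⟨fun h => hne (mul_left_cancel h), ?_⟩
    simpa [mul_inv_rev, mul_assoc] using hs

lemma mulLeftHom_one (g : G) : mulLeftHom S g 1 = g := mul_one g

lemma mulLeftHom_apply (g x : G) : mulLeftHom S g x = g * x := rfl

lemma reachable_mulLeft (g : G) {x y : G} (h : (cayley G S).Reachable x y) :
    (cayley G S).Reachable (g * x) (g * y) :=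
  h.map (mulLeftHom S g)

lemma reachable_one (hgen : Subgroup.closure S = ⊤) (v : G) :
    (cayley G S).Reachable 1 v := by
  have hv : v ∈ Subgroup.closure S := hgen ▸ Subgroup.mem_top v
  induction hv using Subgroup.closure_induction with
  | mem x hx =>
      rcases eq_or_ne x 1 with rfl | hne
      · exact Reachable.refl 1
      · exact SimpleGraph.Adj.reachable ⟨hne.symm, Or.inl (by simpa using hx)⟩
  | one => exact Reachable.refl 1
  | mul x y hx hy ihx ihy =>
      exact ihx.trans (by simpa using reachable_mulLeft x ihy)
  | inv x hx ih =>
      exact (by simpa using reachable_mulLeft x⁻¹ ih : (cayley G S).Reachable x⁻¹ 1).symm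

lemma exists_walk_through (hgen : Subgroup.closure S = ⊤) (A : Finset G) :
    ∀ x y : G, ∃ w : (cayley G S).Walk x y, ∀ a ∈ A, a ∈ w.support := by
  classical
  induction A using Finset.induction with
  | empty =>
      intro x y
      exact ⟨((reachable_one hgen x).symm.trans (reachable_one hgen y)).some, by simp⟩
  | @insert a A' ha ih =>
      intro x y
      obtain ⟨w1⟩ : (cayley G S).Reachable x a :=
        (reachable_one hgen x).symm.trans (reachable_one hgen a)
      obtain ⟨w2, hw2⟩ := ih a y
      refine ⟨w1.append w2, fun b hb => ?_⟩
      rcases Finset.mem_insert.mp hb with rfl | hb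
      · exact (Walk.mem_support_append_iff _ _).mpr (Or.inr w2.start_mem_support)
      · exact (Walk.mem_support_append_iff _ _).mpr (Or.inr (hw2 b hb))

lemma exists_walk_of_list :
    ∀ (l : List G), (∀ s ∈ l, s ∈ S ∨ s⁻¹ ∈ S) → ∀ x : G,
      ∃ w : (cayley G S).Walk x (x * l.prod), w.length ≤ l.length := by
  intro l
  induction l with
  | nil =>
      intro _ x
      exact ⟨Walk.nil.copy rfl (by simp), le_of_eq ((Walk.length_copy _ _ _).trans rfl)⟩
  | cons s t ih =>
      intro hmem x
      obtain ⟨w, hw⟩ := ih (fun a ha => hmem a (List.mem_cons_of_mem _ ha)) (x * s)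
      by_cases hs : x = x * s
      · refine ⟨w.copy hs.symm (by rw [List.prod_cons, ← mul_assoc]), ?_⟩
        exact (Walk.length_copy _ _ _).trans_le (hw.trans (Nat.le_succ _))
      · have hadj : (cayley G S).Adj x (x * s) := by
          refine ⟨hs, ?_⟩
          simpa [mul_inv_rev, mul_assoc] using hmem s List.mem_cons_self
        refine ⟨Walk.cons hadj (w.copy rfl (by rw [List.prod_cons, ← mul_assoc])), ?_⟩
        exact Nat.succ_le_succ ((Walk.length_copy _ _ _).trans_le hw)

lemma list_of_walk :
    ∀ {x y : G} (w : (cayley G S).Walk x y),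
      ∃ l : List G, (∀ s ∈ l, s ∈ S ∨ s⁻¹ ∈ S) ∧ l.prod = x⁻¹ * y ∧ l.length = w.length := by
  intro x y w
  induction w with
  | nil => exact ⟨[], by simp, by simp, rfl⟩
  | @cons x u y h p ih =>
      obtain ⟨l, hl, hprod, hlen⟩ := ih
      refine ⟨(x⁻¹ * u) :: l, ?_, ?_, ?_⟩
      · intro s hs
        rcases List.mem_cons.mp hs with rfl | hs
        · rcases h.2 with h2 | h2
          · exact Or.inl h2
          · exact Or.inr (by simpa [mul_inv_rev] using h2)
        · exact hl s hs
      · rw [List.prod_cons, hprod, ← mul_assoc, mul_assoc x⁻¹ u u⁻¹]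
        simp
      · simp [hlen]

/-- Word length grows by at most one under multiplication by a (symmetrized) generator. -/
lemma wlen_mul_le (hgen : Subgroup.closure S = ⊤) {a : G} (ha : a ∈ S ∨ a⁻¹ ∈ S) (u : G) :
    wlen S (a * u) ≤ wlen S u + 1 := by
  obtain ⟨q, hq⟩ := (reachable_one hgen u).exists_walk_length_eq_dist
  rcases eq_or_ne a 1 with rfl | hne
  · simp [wlen]
  · have hadj : (cayley G S).Adj 1 a := ⟨hne.symm, by simpa using ha⟩
    have hw : (cayley G S).dist 1 (a * u) ≤
        (Walk.cons hadj ((q.map (mulLeftHom S a)).copy (show (mulLeftHom S a) 1 = a from mul_one a) rfl)).length :=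
      dist_le _
    simpa [wlen, hq, Walk.length_copy] using hw

end Stmt14Aux

namespace Stmt14Aux
open SimpleGraph

section WreathAux

variable {Γ' L' : Type*} [Group Γ'] [Group L']

@[simp] lemma shift_apply (t : Γ') (F : ↥(LampGroup Γ' L')) (v : Γ') :
    ((shiftHom Γ' L' t F : ↥(LampGroup Γ' L')) : Γ' → L') v = (F : Γ' → L') (t⁻¹ * v) := rfl

lemma shift_shift (a b : Γ') (F : ↥(LampGroup Γ' L')) :
    shiftHom Γ' L' a (shiftHom Γ' L' b F) = shiftHom Γ' L' (a * b) F := by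
  rw [map_mul]; rfl

@[simp] lemma baseElt_left (t : Γ') : (baseElt Γ' L' t).left = 1 := rfl
@[simp] lemma baseElt_right (t : Γ') : (baseElt Γ' L' t).right = t := rfl
@[simp] lemma lampElt_right (a : L') : (lampElt Γ' L' (a : L')).right = 1 := rfl

lemma lampElt_left_one (a : L') : ((lampElt Γ' L' a).left : Γ' → L') 1 = a := if_pos rfl
lemma lampElt_left_ne (a : L') {v : Γ'} (h : v ≠ 1) :
    ((lampElt Γ' L' a).left : Γ' → L') v = 1 := if_neg h

/-- `lampElt` as a monoid hom. -/
noncomputable def lampHom : L' →* Wreath Γ' L' where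
  toFun := lampElt Γ' L'
  map_one' := by
    refine SemidirectProduct.ext ?_ rfl
    refine Subtype.ext (funext fun v => ?_)
    rcases eq_or_ne v 1 with rfl | h
    · simpa using lampElt_left_one (Γ' := Γ') (1 : L')
    · simpa using lampElt_left_ne (Γ' := Γ') (1 : L') h
  map_mul' := by
    intro a b
    refine SemidirectProduct.ext ?_ (by simp)
    refine Subtype.ext (funext fun v => ?_)
    have : ((lampElt Γ' L' a * lampElt Γ' L' b).left : Γ' → L') v
        = ((lampElt Γ' L' a).left : Γ' → L') v * ((lampElt Γ' L' b).left : Γ' → L') v := by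
      simp [SemidirectProduct.mul_left, map_one]
    rw [this]
    rcases eq_or_ne v 1 with rfl | h
    · simp [lampElt_left_one]
    · simp [lampElt_left_ne _ h]

@[simp] lemma lampHom_apply (a : L') : (lampHom (Γ' := Γ') a) = lampElt Γ' L' a := rfl

/-- `baseElt` as a monoid hom. -/
def baseHom : Γ' →* Wreath Γ' L' where
  toFun := baseElt Γ' L'
  map_one' := rfl
  map_mul' := by
    intro a b
    refine SemidirectProduct.ext ?_ rfl
    refine Subtype.ext (funext fun v => ?_)
    simp [SemidirectProduct.mul_left]

@[simp] lemma baseHom_apply (t : Γ') : (baseHom (L' := L') t) = baseElt Γ' L' t := rfl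

lemma lampElt_inv (a : L') : (lampElt Γ' L' a)⁻¹ = lampElt Γ' L' a⁻¹ := by
  rw [← lampHom_apply, ← lampHom_apply, ← map_inv]

lemma baseElt_inv (t : Γ') : (baseElt Γ' L' t)⁻¹ = baseElt Γ' L' t⁻¹ := by
  rw [← baseHom_apply, ← baseHom_apply, ← map_inv]

variable {SΓ : Set Γ'} {SL : Set L'}

lemma gen_cases {s : Wreath Γ' L'}
    (hs : s ∈ walkOrSwitch Γ' L' SΓ SL ∨ s⁻¹ ∈ walkOrSwitch Γ' L' SΓ SL) :
    (∃ t : Γ', (t ∈ SΓ ∨ t⁻¹ ∈ SΓ) ∧ s = baseElt Γ' L' t) ∨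
    (∃ a : L', (a ∈ SL ∨ a⁻¹ ∈ SL) ∧ s = lampElt Γ' L' a) := by
  rcases hs with hs | hs
  · rcases hs with ⟨t, ht, rfl⟩ | ⟨a, ha, rfl⟩
    · exact Or.inl ⟨t, Or.inl ht, rfl⟩
    · exact Or.inr ⟨a, Or.inl ha, rfl⟩
  · rcases hs with ⟨t, ht, hts⟩ | ⟨a, ha, has⟩
    · refine Or.inl ⟨t⁻¹, Or.inr (by simpa using ht), ?_⟩
      rw [← baseElt_inv, hts, inv_inv]
    · refine Or.inr ⟨a⁻¹, Or.inr (by simpa using ha), ?_⟩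
      rw [← lampElt_inv, has, inv_inv]

lemma base_mem (t : Γ') (ht : t ∈ SΓ ∨ t⁻¹ ∈ SΓ) :
    baseElt Γ' L' t ∈ walkOrSwitch Γ' L' SΓ SL ∨
    (baseElt Γ' L' t)⁻¹ ∈ walkOrSwitch Γ' L' SΓ SL := by
  rcases ht with ht | ht
  · exact Or.inl (Or.inl ⟨t, ht, rfl⟩)
  · exact Or.inr (Or.inl ⟨t⁻¹, ht, by rw [baseElt_inv]⟩)

lemma lamp_mem (a : L') (ha : a ∈ SL ∨ a⁻¹ ∈ SL) :
    lampElt Γ' L' a ∈ walkOrSwitch Γ' L' SΓ SL ∨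
    (lampElt Γ' L' a)⁻¹ ∈ walkOrSwitch Γ' L' SΓ SL := by
  rcases ha with ha | ha
  · exact Or.inl (Or.inr ⟨a, ha, rfl⟩)
  · exact Or.inr (Or.inr ⟨a⁻¹, ha, by rw [lampElt_inv]⟩)

lemma base_mul_left (t : Γ') (w : Wreath Γ' L') :
    (baseElt Γ' L' t * w).left = shiftHom Γ' L' t w.left := by
  simp [SemidirectProduct.mul_left]

lemma base_mul_right (t : Γ') (w : Wreath Γ' L') :
    (baseElt Γ' L' t * w).right = t * w.right := by
  simp [SemidirectProduct.mul_right]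

lemma lamp_mul_left (a : L') (w : Wreath Γ' L') :
    (lampElt Γ' L' a * w).left = (lampElt Γ' L' a).left * w.left := by
  simp [SemidirectProduct.mul_left, map_one]

lemma lamp_mul_right (a : L') (w : Wreath Γ' L') :
    (lampElt Γ' L' a * w).right = w.right := by
  simp [SemidirectProduct.mul_right]

@[simp] lemma wlen_one (S : Set L') : wlen S (1 : L') = 0 := by
  simp [wlen]

lemma wlen_support_finite (F : ↥(LampGroup Γ' L')) (S : Set L') :
    (Function.support fun v => wlen S ((F : Γ' → L') v)).Finite := by
  have hfin : (Function.mulSupport (F : Γ' → L')).Finite := F.2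
  refine hfin.subset fun v hv => ?_
  simp only [Function.mem_support] at hv
  simp only [Function.mem_mulSupport]
  intro h
  rw [h] at hv
  simp at hv

/-- A word (lamp word) realizing `lampElt c`. -/
lemma lamp_word (hgenL : Subgroup.closure SL = ⊤) (c : L') :
    ∃ m : List (Wreath Γ' L'),
      (∀ s ∈ m, s ∈ walkOrSwitch Γ' L' SΓ SL ∨ s⁻¹ ∈ walkOrSwitch Γ' L' SΓ SL) ∧
      m.prod = lampElt Γ' L' c ∧ m.length = wlen SL c := by
  obtain ⟨q, hq⟩ := (reachable_one hgenL c).exists_walk_length_eq_dist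
  obtain ⟨ml, hml, hprod, hlen⟩ := list_of_walk q
  refine ⟨ml.map (lampHom (Γ' := Γ')), ?_, ?_, by simpa [hlen, wlen] using hq⟩
  · intro s hs
    obtain ⟨a, ha, rfl⟩ := List.mem_map.mp hs
    exact lamp_mem a (hml a ha)
  · rw [← map_list_prod, hprod]
    simp

end WreathAux

end Stmt14Aux

namespace Stmt14Aux
open SimpleGraph

section WreathCore

variable {Γ' L' : Type*} [Group Γ'] [Group L'] {SΓ : Set Γ'} {SL : Set L'}

lemma sum_update [DecidableEq Γ'] (T : Finset Γ') (f : Γ' → L') (x : Γ') :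
    wlen SL (f x) + ∑ v ∈ T, wlen SL (Function.update f x 1 v)
      = ∑ v ∈ insert x T, wlen SL (f v) := by
  classical
  have h1 : ∑ v ∈ T, wlen SL (Function.update f x 1 v) = ∑ v ∈ T.erase x, wlen SL (f v) := by
    by_cases hx : x ∈ T
    · rw [← Finset.add_sum_erase T (fun v => wlen SL (Function.update f x 1 v)) hx]
      have h0 : wlen SL (Function.update f x 1 x) = 0 := by simp
      rw [h0, zero_add]
      exact Finset.sum_congr rfl fun v hv => by
        rw [Function.update_of_ne (Finset.ne_of_mem_erase hv)]
    · rw [Finset.erase_eq_of_notMem hx]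
      exact Finset.sum_congr rfl fun v hv => by
        rw [Function.update_of_ne (fun hvx => hx (by rw [← hvx]; exact hv))]
  rw [h1, ← Finset.add_sum_erase _ _ (Finset.mem_insert_self x T), Finset.erase_insert_eq_erase]

lemma finsum_wlen_le (F F₂ : ↥(LampGroup Γ' L')) (SL : Set L')
    (h_ne : ∀ v, v ≠ (1 : Γ') → (F₂ : Γ' → L') v = (F : Γ' → L') v)
    (h_one : wlen SL ((F₂ : Γ' → L') 1) ≤ wlen SL ((F : Γ' → L') 1) + 1) :
    ∑ᶠ v, wlen SL ((F₂ : Γ' → L') v) ≤ (∑ᶠ v, wlen SL ((F : Γ' → L') v)) + 1 := by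
  classical
  set T : Finset Γ' := ((wlen_support_finite F SL).toFinset ∪
    (wlen_support_finite F₂ SL).toFinset) ∪ {1} with hT
  have hsub : Function.support (fun v => wlen SL ((F : Γ' → L') v)) ⊆ (T : Set Γ') := by
    intro v hv
    simp only [hT, Finset.coe_union, Set.mem_union, Finset.coe_singleton]
    exact Or.inl (Or.inl (by simpa using hv))
  have hsub₂ : Function.support (fun v => wlen SL ((F₂ : Γ' → L') v)) ⊆ (T : Set Γ') := by
    intro v hv
    simp only [hT, Finset.coe_union, Set.mem_union, Finset.coe_singleton]
    exact Or.inl (Or.inr (by simpa using hv))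
  rw [finsum_eq_sum_of_support_subset _ hsub, finsum_eq_sum_of_support_subset _ hsub₂]
  have h1 : (1 : Γ') ∈ T := by simp [hT]
  rw [← Finset.add_sum_erase T (fun v => wlen SL ((F : Γ' → L') v)) h1,
    ← Finset.add_sum_erase T (fun v => wlen SL ((F₂ : Γ' → L') v)) h1]
  have heq : ∑ v ∈ T.erase 1, wlen SL ((F₂ : Γ' → L') v)
      = ∑ v ∈ T.erase 1, wlen SL ((F : Γ' → L') v) :=
    Finset.sum_congr rfl fun v hv => by rw [h_ne v (Finset.ne_of_mem_erase hv)]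
  rw [heq]
  omega

lemma finsum_wlen_shift (t : Γ') (F : ↥(LampGroup Γ' L')) (SL : Set L') :
    ∑ᶠ v, wlen SL (((shiftHom Γ' L' t F : ↥(LampGroup Γ' L')) : Γ' → L') v)
      = ∑ᶠ v, wlen SL ((F : Γ' → L') v) := by
  simp only [shift_apply]
  have := finsum_comp_equiv (Equiv.mulLeft t⁻¹) (f := fun v => wlen SL ((F : Γ' → L') v))
  simpa using this

end WreathCore

end Stmt14Aux

namespace Stmt14Aux
open SimpleGraph

section WreathUpper

variable {Γ' L' : Type*} [Group Γ'] [Group L'] {SΓ : Set Γ'} {SL : Set L'}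

lemma upper_list [DecidableEq Γ'] (hgenL : Subgroup.closure SL = ⊤) :
    ∀ {x y : Γ'} (p : (cayley Γ' SΓ).Walk x y) (F : ↥(LampGroup Γ' L')),
      (∀ v, (F : Γ' → L') v ≠ 1 → v ∈ p.support) →
      ∃ l : List (Wreath Γ' L'),
        (∀ s ∈ l, s ∈ walkOrSwitch Γ' L' SΓ SL ∨ s⁻¹ ∈ walkOrSwitch Γ' L' SΓ SL) ∧
        l.prod = ⟨shiftHom Γ' L' x⁻¹ F, x⁻¹ * y⟩ ∧
        l.length = p.length + ∑ v ∈ p.support.toFinset, wlen SL ((F : Γ' → L') v) := by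
  classical
  intro x y p
  induction p with
  | @nil x =>
      intro F hF
      obtain ⟨m, hm, hprod, hlen⟩ := lamp_word (SΓ := SΓ) hgenL ((F : Γ' → L') x)
      refine ⟨m, hm, ?_, ?_⟩
      · rw [hprod]
        refine SemidirectProduct.ext ?_ (by simp)
        refine Subtype.ext (funext fun v => ?_)
        show ((lampElt Γ' L' ((F : Γ' → L') x)).left : Γ' → L') v = (F : Γ' → L') (x⁻¹⁻¹ * v)
        rcases eq_or_ne v 1 with rfl | hv
        · rw [lampElt_left_one]
          simp
        · rw [lampElt_left_ne _ hv]
          rw [inv_inv]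
          by_contra hne
          have := hF (x * v) (Ne.symm hne)
          simp only [Walk.support_nil, List.mem_singleton] at this
          exact hv (by simpa using mul_left_cancel (a := x) (by rw [this, mul_one]))
      · rw [hlen]
        simp
  | @cons x x' y h q ih =>
      intro F hF
      -- the lamp configuration with the lamp at `x` switched off
      have hmem' : Function.update (F : Γ' → L') x 1 ∈ LampGroup Γ' L' := by
        have hfin : (Function.mulSupport (F : Γ' → L')).Finite := F.2
        refine Set.Finite.subset hfin fun v hv => ?_
        simp only [Function.mem_mulSupport] at hv ⊢
        intro hFv
        by_cases hvx : v = x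
        · exact hv (by rw [hvx, Function.update_self])
        · exact hv (by rw [Function.update_of_ne hvx]; exact hFv)
      set F' : ↥(LampGroup Γ' L') := ⟨Function.update (F : Γ' → L') x 1, hmem'⟩ with hF'def
      have hF'supp : ∀ v, (F' : Γ' → L') v ≠ 1 → v ∈ q.support := by
        intro v hv
        have hv' : Function.update (F : Γ' → L') x 1 v ≠ 1 := hv
        by_cases hvx : v = x
        · subst hvx
          rw [Function.update_self] at hv'
          exact absurd rfl hv'
        · rw [Function.update_of_ne hvx] at hv'
          have := hF v hv'
          rw [Walk.support_cons] at this
          rcases List.mem_cons.mp this with rfl | hmem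
          · exact absurd rfl hvx
          · exact hmem
      obtain ⟨l', hl'mem, hl'prod, hl'len⟩ := ih F' hF'supp
      obtain ⟨m, hm, hmprod, hmlen⟩ := lamp_word (SΓ := SΓ) hgenL ((F : Γ' → L') x)
      have hadj : x⁻¹ * x' ∈ SΓ ∨ (x⁻¹ * x')⁻¹ ∈ SΓ := by
        rcases h.2 with h2 | h2
        · exact Or.inl h2
        · exact Or.inr (by simpa [mul_inv_rev] using h2)
      refine ⟨m ++ baseElt Γ' L' (x⁻¹ * x') :: l', ?_, ?_, ?_⟩
      · intro s hs
        rcases List.mem_append.mp hs with hs | hs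
        · exact hm s hs
        · rcases List.mem_cons.mp hs with rfl | hs
          · exact base_mem _ hadj
          · exact hl'mem s hs
      · rw [List.prod_append, List.prod_cons, hmprod, hl'prod]
        have hmid : baseElt Γ' L' (x⁻¹ * x') * (⟨shiftHom Γ' L' x'⁻¹ F', x'⁻¹ * y⟩ : Wreath Γ' L')
            = ⟨shiftHom Γ' L' x⁻¹ F', x⁻¹ * y⟩ := by
          refine SemidirectProduct.ext ?_ ?_
          · rw [base_mul_left]
            show shiftHom Γ' L' (x⁻¹ * x') (shiftHom Γ' L' x'⁻¹ F') = shiftHom Γ' L' x⁻¹ F'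
            rw [shift_shift, mul_inv_cancel_right]
          · rw [base_mul_right]
            group
        rw [hmid]
        refine SemidirectProduct.ext ?_ (by rw [lamp_mul_right])
        rw [lamp_mul_left]
        refine Subtype.ext (funext fun v => ?_)
        show ((lampElt Γ' L' ((F : Γ' → L') x)).left : Γ' → L') v *
            (F' : Γ' → L') (x⁻¹⁻¹ * v) = (F : Γ' → L') (x⁻¹⁻¹ * v)
        rw [inv_inv]
        rcases eq_or_ne v 1 with rfl | hv
        · rw [lampElt_left_one, mul_one]
          show (F : Γ' → L') x * Function.update (F : Γ' → L') x 1 x = (F : Γ' → L') x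
          rw [Function.update_self, mul_one]
        · rw [lampElt_left_ne _ hv, one_mul]
          show Function.update (F : Γ' → L') x 1 (x * v) = (F : Γ' → L') (x * v)
          refine Function.update_of_ne (fun hc => hv ?_) _ _
          exact mul_left_cancel (a := x) (by rw [hc, mul_one])
      · rw [List.length_append, List.length_cons, hl'len, hmlen, Walk.length_cons,
          Walk.support_cons, List.toFinset_cons]
        have := sum_update (SL := SL) q.support.toFinset (F : Γ' → L') x
        rw [hF'def]
        show wlen SL ((F : Γ' → L') x) +
            (q.length + ∑ v ∈ q.support.toFinset, wlen SL (Function.update (F : Γ' → L') x 1 v) + 1)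
            = q.length + 1 + ∑ v ∈ insert x q.support.toFinset, wlen SL ((F : Γ' → L') v)
        omega

end WreathUpper

end Stmt14Aux

namespace Stmt14Aux
open SimpleGraph

section WreathLower

variable {Γ' L' : Type*} [Group Γ'] [Group L'] {SΓ : Set Γ'} {SL : Set L'}

lemma lower_walk (hgenL : Subgroup.closure SL = ⊤) :
    ∀ (l : List (Wreath Γ' L')),
      (∀ s ∈ l, s ∈ walkOrSwitch Γ' L' SΓ SL ∨ s⁻¹ ∈ walkOrSwitch Γ' L' SΓ SL) →
      ∃ p : (cayley Γ' SΓ).Walk 1 l.prod.right,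
        (∀ v, (l.prod.left : Γ' → L') v ≠ 1 → v ∈ p.support) ∧
        p.length + ∑ᶠ v, wlen SL ((l.prod.left : Γ' → L') v) ≤ l.length := by
  intro l
  induction l with
  | nil =>
      intro _
      refine ⟨Walk.nil.copy rfl (by simp), fun v hv => absurd rfl hv, ?_⟩
      have hz : (fun v : Γ' => wlen SL (((List.prod ([] : List (Wreath Γ' L'))).left : Γ' → L') v))
          = fun _ => (0 : ℕ) := by
        funext v
        show wlen SL (1 : L') = 0
        simp
      rw [hz]
      simp
  | cons s r ih =>
      intro hmem
      obtain ⟨p, hpsupp, hplen⟩ := ih (fun a ha => hmem a (List.mem_cons_of_mem _ ha))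
      rcases gen_cases (hmem s List.mem_cons_self) with ⟨t, ht, rfl⟩ | ⟨a, ha, rfl⟩
      · -- base step
        have hL : ((baseElt Γ' L' t :: r).prod).left = shiftHom Γ' L' t (r.prod).left := by
          rw [List.prod_cons, base_mul_left]
        have hR : ((baseElt Γ' L' t :: r).prod).right = t * (r.prod).right := by
          rw [List.prod_cons, base_mul_right]
        have hsum : ∑ᶠ v, wlen SL ((((baseElt Γ' L' t :: r).prod).left : Γ' → L') v)
            = ∑ᶠ v, wlen SL (((r.prod).left : Γ' → L') v) := by
          rw [hL]
          exact finsum_wlen_shift t _ SL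
        rcases eq_or_ne t 1 with rfl | hne
        · refine ⟨p.copy rfl (by rw [hR, one_mul]), ?_, ?_⟩
          · intro v hv
            rw [Walk.support_copy]
            refine hpsupp v ?_
            rw [hL] at hv
            simpa using hv
          · rw [Walk.length_copy, hsum, List.length_cons]
            exact hplen.trans (Nat.le_succ _)
        · have hadj : (cayley Γ' SΓ).Adj 1 t := ⟨hne.symm, by simpa using ht⟩
          refine ⟨(Walk.cons hadj ((p.map (mulLeftHom SΓ t)).copy (mulLeftHom_one t) rfl)).copy rfl
            ((mulLeftHom_apply t _).trans hR.symm), ?_, ?_⟩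
          · intro v hv
            rw [Walk.support_copy, Walk.support_cons]
            rw [hL] at hv
            have hv' : ((r.prod).left : Γ' → L') (t⁻¹ * v) ≠ 1 := by simpa using hv
            have := hpsupp _ hv'
            refine List.mem_cons.mpr (Or.inr ?_)
            rw [Walk.support_copy, Walk.support_map]
            refine List.mem_map.mpr ⟨t⁻¹ * v, this, ?_⟩
            show t * (t⁻¹ * v) = v
            group
          · rw [Walk.length_copy, Walk.length_cons, Walk.length_copy, Walk.length_map,
              hsum, List.length_cons]
            omega
      · -- lamp step
        have hL : ((lampElt Γ' L' a :: r).prod).left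
            = (lampElt Γ' L' a).left * (r.prod).left := by
          rw [List.prod_cons, lamp_mul_left]
        have hR : ((lampElt Γ' L' a :: r).prod).right = (r.prod).right := by
          rw [List.prod_cons, lamp_mul_right]
        have h_ne : ∀ v, v ≠ (1 : Γ') →
            (((lampElt Γ' L' a :: r).prod).left : Γ' → L') v = ((r.prod).left : Γ' → L') v := by
          intro v hv
          rw [hL]
          show ((lampElt Γ' L' a).left : Γ' → L') v * ((r.prod).left : Γ' → L') v = _
          rw [lampElt_left_ne _ hv, one_mul]
        have h_one : wlen SL ((((lampElt Γ' L' a :: r).prod).left : Γ' → L') 1)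
            ≤ wlen SL (((r.prod).left : Γ' → L') 1) + 1 := by
          rw [hL]
          show wlen SL (((lampElt Γ' L' a).left : Γ' → L') 1 * ((r.prod).left : Γ' → L') 1) ≤ _
          rw [lampElt_left_one]
          exact wlen_mul_le hgenL ha _
        refine ⟨p.copy rfl hR.symm, ?_, ?_⟩
        · intro v hv
          rw [Walk.support_copy]
          rcases eq_or_ne v 1 with rfl | hvne
          · exact p.start_mem_support
          · exact hpsupp v (by rw [← h_ne v hvne]; exact hv)
        · rw [Walk.length_copy, List.length_cons]
          have := finsum_wlen_le (r.prod).left ((lampElt Γ' L' a :: r).prod).left SL h_ne h_one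
          omega

end WreathLower

end Stmt14Aux

/-- In `Γ ≀ L` with the "switch or walk" generating set `S_Γ ∪ S_L`, the word
norm of `g = (γ, f)` is `∑_x |f x|_{S_L}` plus the travelling salesman distance in `Cay(Γ,S_Γ)`
from `e_Γ` to `γ` through the support of `f`. -/
theorem stmt_14 {Γ L : Type*} [Group Γ] [Group L]
    (SΓ : Set Γ) (SL : Set L) (hfinΓ : SΓ.Finite) (hfinL : SL.Finite)
    (hgenΓ : Subgroup.closure SΓ = ⊤) (hgenL : Subgroup.closure SL = ⊤)
    (γ : Γ) (f : Γ → L) (hf : f ∈ LampGroup Γ L) :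
    wlen (walkOrSwitch Γ L SΓ SL) (⟨⟨f, hf⟩, γ⟩ : Wreath Γ L)
      = (∑ᶠ x : Γ, wlen SL (f x)) + tsDist (cayley Γ SΓ) 1 (Function.mulSupport f) γ := by
  classical
  open Stmt14Aux in
  set g : Wreath Γ L := ⟨⟨f, hf⟩, γ⟩ with hg_def
  set A : Set Γ := Function.mulSupport f with hA_def
  have hAfin : A.Finite := hf
  -- the TS walk realizing the travelling salesman distance
  have hTSne : {n | ∃ w : (cayley Γ SΓ).Walk 1 γ, w.length = n ∧ ∀ a ∈ A, a ∈ w.support}.Nonempty := by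
    obtain ⟨w, hw⟩ := Stmt14Aux.exists_walk_through hgenΓ hAfin.toFinset 1 γ
    exact ⟨w.length, w, rfl, fun a ha => hw a (hAfin.mem_toFinset.mpr ha)⟩
  obtain ⟨w, hwlen, hwsupp⟩ := Nat.sInf_mem hTSne
  -- the word realizing the upper bound
  obtain ⟨l, hlmem, hlprod, hllen⟩ :=
    Stmt14Aux.upper_list (SΓ := SΓ) (SL := SL) hgenL w ⟨f, hf⟩
      (fun v hv => hwsupp v (Function.mem_mulSupport.mpr hv))
  have hlprodg : l.prod = g := by
    rw [hlprod, hg_def]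
    refine SemidirectProduct.ext ?_ (by simp)
    show shiftHom Γ L 1⁻¹ (⟨f, hf⟩ : ↥(LampGroup Γ L)) = ⟨f, hf⟩
    rw [inv_one, map_one]
    rfl
  obtain ⟨wW, hwW⟩ := Stmt14Aux.exists_walk_of_list l hlmem 1
  have hprodend : (1 : Wreath Γ L) * l.prod = g := by rw [one_mul, hlprodg]
  -- upper bound
  have hupper : wlen (walkOrSwitch Γ L SΓ SL) g
      ≤ (∑ᶠ x : Γ, wlen SL (f x)) + tsDist (cayley Γ SΓ) 1 A γ := by
    have h1 : wlen (walkOrSwitch Γ L SΓ SL) g ≤ (wW.copy rfl hprodend).length :=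
      SimpleGraph.dist_le _
    have h2 : (wW.copy rfl hprodend).length ≤ l.length := by
      rw [SimpleGraph.Walk.length_copy]
      exact hwW
    have hsum : ∑ᶠ x : Γ, wlen SL (f x) = ∑ v ∈ w.support.toFinset, wlen SL (f v) := by
      refine finsum_eq_sum_of_support_subset _ fun v hv => ?_
      have hfv : f v ≠ 1 := by
        intro hc
        simp only [Function.mem_support] at hv
        rw [hc] at hv
        simp at hv
      exact List.mem_toFinset.mpr (hwsupp v (Function.mem_mulSupport.mpr hfv))
    have hts : tsDist (cayley Γ SΓ) 1 A γ = w.length := hwlen.symm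
    rw [hsum, hts]
    have : l.length = w.length + ∑ v ∈ w.support.toFinset, wlen SL (f v) := hllen
    omega
  -- lower bound
  have hreach : (cayley (Wreath Γ L) (walkOrSwitch Γ L SΓ SL)).Reachable 1 g :=
    ⟨wW.copy rfl hprodend⟩
  obtain ⟨wd, hwd⟩ := hreach.exists_walk_length_eq_dist
  obtain ⟨l₂, hl₂mem, hl₂prod, hl₂len⟩ := Stmt14Aux.list_of_walk wd
  have hl₂g : l₂.prod = g := by rw [hl₂prod, inv_one, one_mul]
  obtain ⟨p, hpsupp, hplen⟩ := Stmt14Aux.lower_walk (SΓ := SΓ) hgenL l₂ hl₂mem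
  have hrt : l₂.prod.right = γ := by rw [hl₂g]
  have hpsupp' : ∀ v, f v ≠ 1 → v ∈ p.support := by
    intro v hv
    apply hpsupp
    show ((l₂.prod.left : ↥(LampGroup Γ L)) : Γ → L) v ≠ 1
    rw [hl₂g]
    exact hv
  have hlower : (∑ᶠ x : Γ, wlen SL (f x)) + tsDist (cayley Γ SΓ) 1 A γ
      ≤ wlen (walkOrSwitch Γ L SΓ SL) g := by
    have hts : tsDist (cayley Γ SΓ) 1 A γ ≤ p.length := by
      refine Nat.sInf_le ⟨p.copy rfl hrt, ?_, ?_⟩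
      · rw [SimpleGraph.Walk.length_copy]
      · intro a ha
        rw [SimpleGraph.Walk.support_copy]
        exact hpsupp' a (Function.mem_mulSupport.mp ha)
    have hsum : ∑ᶠ v, wlen SL ((l₂.prod.left : Γ → L) v) = ∑ᶠ x : Γ, wlen SL (f x) := by
      rw [hl₂g]
    have hlen : p.length + ∑ᶠ v, wlen SL ((l₂.prod.left : Γ → L) v) ≤ l₂.length := hplen
    rw [hsum] at hlen
    have : l₂.length = wlen (walkOrSwitch Γ L SΓ SL) g := by
      rw [hl₂len, hwd]
      rfl
    omega
  exact le_antisymm hupper hlower
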